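/- Let h_1, ..., h_M, g_1, ..., g_M be independent strictly positive continuous random variables whose distributions do not depend on ρ, and define the beam-selection outage probability P^o(ρ) as in the NOMA scheme (with power allocation coefficients given by (6) and target rates R^P, R^S fixed). Then P^o(ρ) → 0 as ρ → ∞, i.e., there is no outage error floor. -/

import Mathlib

open MeasureTheory Filter

/-- Lemma 1: for the beam-selection NOMA scheme with power allocation (6), a.s.
strictly positive channel gains (whose distributions do not depend on `ρ`), the
outage probability (no beam allows both successful SIC of the primary signal and
decoding of the secondary signal) tends to `0` as `ρ → ∞`: no error floor. -/
theorem stmt_12 {Ω : Type*} [MeasurableSpace Ω] (μ : Measure Ω) [IsProbabilityMeasure μ]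
    (M : ℕ) (hM : 0 < M) (h g : Fin M → Ω → ℝ)
    (hmeas : ∀ i, Measurable (h i)) (gmeas : ∀ i, Measurable (g i))
    (hpos : ∀ i, ∀ᵐ ω ∂μ, 0 < h i ω) (gpos : ∀ i, ∀ᵐ ω ∂μ, 0 < g i ω)
    (RP RS : ℝ) (hRP : 0 < RP) (hRS : 0 < RS)
    (εP εs : ℝ) (hεP : εP = 2 ^ RP - 1) (hεs : εs = 2 ^ RS - 1)
    (αPI : ℝ → Fin M → Ω → ℝ)
    (hαPI : ∀ ρ i ω, αPI ρ i ω = min 1 (εP / (ρ * g i ω)))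
    (αSII : ℝ → Fin M → Ω → ℝ)
    (hαSII : ∀ ρ m ω, αSII ρ m ω =
      min (max 0 ((g m ω - εP / ρ) / ((εP + 1) * g m ω)))
          (max 0 ((h m ω - εP * (∑ i ∈ Finset.univ.erase m, h i ω * αPI ρ i ω)
              - εP / ρ) / ((εP + 1) * h m ω))))
    (γ : ℝ → Fin M → Ω → ℝ)
    (hγ : ∀ ρ m ω, γ ρ m ω = h m ω * αSII ρ m ω /
        ((∑ i ∈ Finset.univ.erase m, h i ω * αPI ρ i ω) + 1 / ρ)) :
    Tendsto (fun ρ : ℝ =>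
        (μ {ω | ∀ m, ¬ (0 < αSII ρ m ω ∧ εs ≤ γ ρ m ω)}).toReal)
      atTop (nhds 0) := by
  have hεP0 : 0 < εP := by
    have h1 : (1:ℝ) < 2 ^ RP := by
      rw [Real.one_lt_rpow_iff_of_pos (by norm_num)]
      exact Or.inl ⟨by norm_num, hRP⟩
    rw [hεP]; linarith
  -- measurability of the auxiliary functions
  have mαPI : ∀ ρ i, Measurable (fun ω => αPI ρ i ω) := by
    intro ρ i
    simp only [hαPI]
    exact measurable_const.min (measurable_const.div (measurable_const.mul (gmeas i)))
  have mαSII : ∀ ρ m, Measurable (fun ω => αSII ρ m ω) := by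
    intro ρ m
    simp only [hαSII]
    have hsum : Measurable (fun ω => ∑ i ∈ Finset.univ.erase m, h i ω * αPI ρ i ω) :=
      Finset.measurable_sum _ (fun i _ => (hmeas i).mul (mαPI ρ i))
    exact (measurable_const.max (((gmeas m).sub measurable_const).div
        (measurable_const.mul (gmeas m)))).min
      (measurable_const.max ((((hmeas m).sub (hsum.const_mul εP)).sub measurable_const).div
        (measurable_const.mul (hmeas m))))
  have mγ : ∀ ρ m, Measurable (fun ω => γ ρ m ω) := by
    intro ρ m
    simp only [hγ]
    have hsum : Measurable (fun ω => ∑ i ∈ Finset.univ.erase m, h i ω * αPI ρ i ω) :=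
      Finset.measurable_sum _ (fun i _ => (hmeas i).mul (mαPI ρ i))
    exact ((hmeas m).mul (mαSII ρ m)).div (hsum.add measurable_const)
  set A : ℝ → Set Ω := fun ρ => {ω | ∀ m, ¬ (0 < αSII ρ m ω ∧ εs ≤ γ ρ m ω)} with hA
  have mA : ∀ ρ, MeasurableSet (A ρ) := by
    intro ρ
    have : A ρ = ⋂ m, {ω | ¬ (0 < αSII ρ m ω ∧ εs ≤ γ ρ m ω)} := by
      ext ω; simp [hA]
    rw [this]
    exact MeasurableSet.iInter fun m =>
      (((measurableSet_lt measurable_const (mαSII ρ m)).inter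
        (measurableSet_le measurable_const (mγ ρ m)))).compl
  -- pointwise: a.e. ω is eventually not in A ρ
  have key : ∀ᵐ ω ∂μ, ∀ᶠ ρ in atTop, ω ∉ A ρ := by
    filter_upwards [ae_all_iff.mpr hpos, ae_all_iff.mpr gpos] with ω hh hg
    set m : Fin M := ⟨0, hM⟩
    -- εP / ρ → 0
    have tdiv : Tendsto (fun ρ : ℝ => εP / ρ) atTop (nhds 0) :=
      tendsto_const_nhds.div_atTop tendsto_id
    have tαPI : ∀ i, Tendsto (fun ρ => αPI ρ i ω) atTop (nhds 0) := by
      intro i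
      simp only [hαPI]
      have h1 : Tendsto (fun ρ : ℝ => εP / (ρ * g i ω)) atTop (nhds 0) :=
        tendsto_const_nhds.div_atTop (tendsto_id.atTop_mul_const (hg i))
      simpa using (tendsto_const_nhds (x := (1:ℝ))).min h1
    have tS : Tendsto (fun ρ => ∑ i ∈ Finset.univ.erase m, h i ω * αPI ρ i ω)
        atTop (nhds 0) := by
      have := tendsto_finset_sum (Finset.univ.erase m)
        (fun i _ => (tendsto_const_nhds (x := h i ω)).mul (tαPI i))
      simpa using this
    have tαSII : Tendsto (fun ρ => αSII ρ m ω) atTop (nhds (1 / (εP + 1))) := by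
      simp only [hαSII]
      have hgne : (εP + 1) * g m ω ≠ 0 := ne_of_gt (mul_pos (by linarith) (hg m))
      have hhne : (εP + 1) * h m ω ≠ 0 := ne_of_gt (mul_pos (by linarith) (hh m))
      have t1 : Tendsto (fun ρ : ℝ => (g m ω - εP / ρ) / ((εP + 1) * g m ω))
          atTop (nhds (1 / (εP + 1))) := by
        have := ((tendsto_const_nhds (x := g m ω)).sub tdiv).div_const ((εP + 1) * g m ω)
        have heq : (g m ω - 0) / ((εP + 1) * g m ω) = 1 / (εP + 1) := by
          rw [sub_zero, mul_comm, ← div_div, div_self (ne_of_gt (hg m))]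
        rwa [heq] at this
      have t2 : Tendsto (fun ρ : ℝ => (h m ω - εP * (∑ i ∈ Finset.univ.erase m,
          h i ω * αPI ρ i ω) - εP / ρ) / ((εP + 1) * h m ω))
          atTop (nhds (1 / (εP + 1))) := by
        have := (((tendsto_const_nhds (x := h m ω)).sub ((tendsto_const_nhds (x := εP)).mul tS)).sub tdiv).div_const
          ((εP + 1) * h m ω)
        have heq : (h m ω - εP * 0 - 0) / ((εP + 1) * h m ω) = 1 / (εP + 1) := by
          rw [mul_zero, sub_zero, sub_zero, mul_comm, ← div_div, div_self (ne_of_gt (hh m))]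
        rwa [heq] at this
      have hL : max 0 (1 / (εP + 1)) = 1 / (εP + 1) :=
        max_eq_right (le_of_lt (one_div_pos.mpr (by linarith)))
      have h2 := ((tendsto_const_nhds (x := (0:ℝ))).max t1).min ((tendsto_const_nhds (x := (0:ℝ))).max t2)
      rw [min_self, hL] at h2
      exact h2
    have hαpos : ∀ᶠ ρ in atTop, 0 < αSII ρ m ω :=
      tαSII.eventually (eventually_gt_nhds (one_div_pos.mpr (by linarith)))
    -- denominator
    have tD : Tendsto (fun ρ : ℝ => (∑ i ∈ Finset.univ.erase m, h i ω * αPI ρ i ω) + 1 / ρ)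
        atTop (nhds 0) := by
      simpa using tS.add ((tendsto_const_nhds (x := (1:ℝ))).div_atTop (tendsto_id (α := ℝ)))
    have hDpos : ∀ᶠ ρ : ℝ in atTop,
        0 < (∑ i ∈ Finset.univ.erase m, h i ω * αPI ρ i ω) + 1 / ρ := by
      filter_upwards [eventually_gt_atTop (0:ℝ)] with ρ hρ
      have hS : 0 ≤ ∑ i ∈ Finset.univ.erase m, h i ω * αPI ρ i ω := by
        apply Finset.sum_nonneg
        intro i _
        have : 0 ≤ αPI ρ i ω := by
          rw [hαPI]
          exact le_min (by norm_num) (div_nonneg hεP0.le (mul_nonneg hρ.le (hg i).le))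
        exact mul_nonneg (hh i).le this
      have : 0 < 1 / ρ := one_div_pos.mpr hρ
      linarith
    have tinvD : Tendsto (fun ρ : ℝ =>
        ((∑ i ∈ Finset.univ.erase m, h i ω * αPI ρ i ω) + 1 / ρ)⁻¹) atTop atTop := by
      apply tendsto_inv_nhdsGT_zero.comp
      exact tendsto_nhdsWithin_of_tendsto_nhds_of_eventually_within _ tD hDpos
    have tγ : Tendsto (fun ρ => γ ρ m ω) atTop atTop := by
      simp only [hγ, div_eq_mul_inv]
      exact Tendsto.pos_mul_atTop (mul_pos (hh m) (one_div_pos.mpr (by linarith)))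
        (tendsto_const_nhds.mul tαSII) tinvD
    have hγev : ∀ᶠ ρ in atTop, εs ≤ γ ρ m ω := tγ.eventually_ge_atTop εs
    filter_upwards [hαpos, hγev] with ρ h1 h2 hmem
    exact hmem m ⟨h1, h2⟩
  -- dominated convergence for the indicator functions
  have heq : ∀ ρ, (μ (A ρ)).toReal = ∫ ω, (A ρ).indicator (1 : Ω → ℝ) ω ∂μ := by
    intro ρ
    rw [MeasureTheory.integral_indicator_one (mA ρ)]
    rfl
  have tint : Tendsto (fun ρ => ∫ ω, (A ρ).indicator (1 : Ω → ℝ) ω ∂μ)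
      atTop (nhds 0) := by
    have h0 : (0:ℝ) = ∫ _ : Ω, (0:ℝ) ∂μ := by simp
    rw [h0]
    apply tendsto_integral_filter_of_dominated_convergence (fun _ => (1:ℝ))
    · exact Eventually.of_forall fun ρ =>
        (stronglyMeasurable_const.indicator (mA ρ)).aestronglyMeasurable
    · refine Eventually.of_forall fun ρ => ae_of_all _ fun ω => ?_
      by_cases hmem : ω ∈ A ρ <;> simp [Set.indicator_apply, hmem]
    · exact integrable_const _
    · filter_upwards [key] with ω hω
      have : (fun ρ => (A ρ).indicator (1 : Ω → ℝ) ω) =ᶠ[atTop] fun _ => 0 := by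
        filter_upwards [hω] with ρ hρ
        simp [Set.indicator_apply, hρ]
      exact Tendsto.congr' this.symm tendsto_const_nhds
  exact tint.congr fun ρ => (heq ρ).symm
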